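/- Let μ_y, q₁, V, C be real numbers with V > 0 and q₁ V − C² > 0. Then the global minimum value of the function h(m₁₁, m₁₂) = μ_y² + m₁₁² q₁ + m₁₂² V − 2 m₁₁ m₁₂ C − 2 m₁₁ μ_y² over ℝ² equals μ_y² − μ_y⁴ V / (q₁ V − C²); that is, this value is attained and h(m₁₁, m₁₂) ≥ μ_y² − μ_y⁴ V / (q₁ V − C²) for all real m₁₁, m₁₂. -/

import Mathlib

/-- The first-order MSE of the proposed class of estimators `t_p` as a function of
`m₁₁, m₁₂`: `h(m₁₁, m₁₂) = μ_y² + m₁₁² q₁ + m₁₂² V − 2 m₁₁ m₁₂ C − 2 m₁₁ μ_y²`. -/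
def mseTp (μy q₁ V C m₁₁ m₁₂ : ℝ) : ℝ :=
  μy ^ 2 + m₁₁ ^ 2 * q₁ + m₁₂ ^ 2 * V - 2 * m₁₁ * m₁₂ * C - 2 * m₁₁ * μy ^ 2

/-- with `V > 0` and `q₁ V − C² > 0`, the global minimum value of
`h(m₁₁, m₁₂) = μ_y² + m₁₁² q₁ + m₁₂² V − 2 m₁₁ m₁₂ C − 2 m₁₁ μ_y²` over `ℝ²` equals
`μ_y² − μ_y⁴ V / (q₁ V − C²)`, and it is attained. -/
theorem mseTp_min_value (μy q₁ V C : ℝ) (hV : 0 < V)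
    (hD : 0 < q₁ * V - C ^ 2) :
    IsLeast (Set.range fun p : ℝ × ℝ => mseTp μy q₁ V C p.1 p.2)
      (μy ^ 2 - μy ^ 4 * V / (q₁ * V - C ^ 2)) := by
  constructor
  · refine ⟨(μy ^ 2 * V / (q₁ * V - C ^ 2), μy ^ 2 * C / (q₁ * V - C ^ 2)), ?_⟩
    unfold mseTp
    field_simp [show V * q₁ - C ^ 2 ≠ 0 by linarith]
    ring_nf
  · rintro x ⟨⟨m₁, m₂⟩, rfl⟩
    simp only
    rw [sub_le_iff_le_add, ← sub_le_iff_le_add', le_div_iff₀ hD]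
    unfold mseTp
    nlinarith [mul_nonneg hD.le (sq_nonneg (V * m₂ - C * m₁)), sq_nonneg ((q₁ * V - C ^ 2) * m₁ - μy ^ 2 * V), mul_pos hV hD]
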